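/- There exists a function b : H¹ → R which is 1-Lipschitz with respect to the Koranyi distance d_k, is Pansu differentiable at every point of H¹, is nonnegative, has compact support, and is not identically zero. -/

import Mathlib

open Filter Topology MeasureTheory
open scoped NNReal ENNReal

noncomputable section

/-- The underlying space of the first Heisenberg group: `ℝ³`. -/
abbrev Heis : Type := ℝ × ℝ × ℝ

/-- Heisenberg group multiplication:
`(x,y,t)·(x',y',t') = (x+x', y+y', t+t' − 2(xy' − yx'))`. -/
def hmul (p q : Heis) : Heis :=
  (p.1 + q.1, p.2.1 + q.2.1, p.2.2 + q.2.2 - 2 * (p.1 * q.2.1 - p.2.1 * q.1))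

/-- Heisenberg group inverse: `(x,y,t)⁻¹ = (−x,−y,−t)`. -/
def hinv (p : Heis) : Heis := (-p.1, -p.2.1, -p.2.2)

/-- Koranyi norm: `‖(x,y,t)‖ = ((x²+y²)² + t²)^(1/4)`. -/
def knorm (p : Heis) : ℝ := ((p.1 ^ 2 + p.2.1 ^ 2) ^ 2 + p.2.2 ^ 2) ^ ((1 : ℝ) / 4)

/-- Koranyi distance: `d_k(a,b) = ‖a⁻¹·b‖_k`. -/
def dk (p q : Heis) : ℝ := knorm (hmul (hinv p) q)

/-- Euclidean distance on `ℝ³`. -/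
def de (p q : Heis) : ℝ :=
  Real.sqrt ((p.1 - q.1) ^ 2 + (p.2.1 - q.2.1) ^ 2 + (p.2.2 - q.2.2) ^ 2)

/-- Dilation `δ_r(x,y,t) = (rx, ry, r²t)`. -/
def hdil (r : ℝ) (p : Heis) : Heis := (r * p.1, r * p.2.1, r ^ 2 * p.2.2)

/-- Open ball with respect to a distance function `d`. -/
def ballD {M : Type*} (d : M → M → ℝ) (x : M) (r : ℝ) : Set M := {y | d x y < r}

/-- `E` is `lam`-porous at `a` with respect to the distance function `d`: there are points
`x n` converging to `a` such that `B(x n, lam * d(x n, a))` misses `E`. -/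
def PorousAtD {M : Type*} (d : M → M → ℝ) (lam : ℝ) (E : Set M) (a : M) : Prop :=
  ∃ x : ℕ → M, Tendsto (fun n => d (x n) a) atTop (𝓝 0) ∧
    ∀ n, ballD d (x n) (lam * d (x n) a) ∩ E = ∅

/-- `E` is porous w.r.t. `d`: a single `lam ∈ (0,1)` works at every point of `E`. -/
def PorousD {M : Type*} (d : M → M → ℝ) (E : Set M) : Prop :=
  ∃ lam : ℝ, 0 < lam ∧ lam < 1 ∧ ∀ a ∈ E, PorousAtD d lam E a

/-- `E` is σ-porous w.r.t. `d`: a countable union of porous sets. -/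
def SigmaPorousD {M : Type*} (d : M → M → ℝ) (E : Set M) : Prop :=
  ∃ f : ℕ → Set M, (∀ n, PorousD d (f n)) ∧ E = ⋃ n, f n

/-- The translated dilated Cantor set `A_{n,k} = 2⁻ⁿ + k·2⁻²ⁿ + 2⁻²ⁿ·C`. -/
def Acantor (n k : ℕ) : Set ℝ :=
  (fun c => (2:ℝ) ^ (-(n:ℤ)) + (k : ℝ) * (2:ℝ) ^ (-(2*n:ℤ)) + (2:ℝ) ^ (-(2*n:ℤ)) * c) ''
    cantorSet

/-- `|(x,y)|` for `p = (x,y,t)`. -/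
def normxy (p : Heis) : ℝ := Real.sqrt (p.1 ^ 2 + p.2.1 ^ 2)

/-- `{0} ∪ ⋃_{n≥1} ⋃_{0 ≤ k ≤ 2ⁿ−1} {p : |(x,y)| ∈ A_{n,k}}`. -/
def cantorUnion : Set Heis :=
  {(0 : Heis)} ∪
    ⋃ (n : ℕ) (_ : 1 ≤ n) (k : ℕ) (_ : k < 2 ^ n), {p : Heis | normxy p ∈ Acantor n k}

/-- The cone `Λ = {(x,y,t) : |t| ≤ |(x,y)|}`. -/
def LambdaCone : Set Heis := {p : Heis | |p.2.2| ≤ normxy p}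

/-- The set `P_e = Λ ∩ ({0} ∪ ⋃ A_{n,k}-cylinders)`. -/
def Pe : Set Heis := LambdaCone ∩ cantorUnion

/-- The cusp `Υ = {(x,y,t) : |t| ≥ 2|(x,y)|²}`. -/
def UpsilonCusp : Set Heis := {p : Heis | 2 * normxy p ^ 2 ≤ |p.2.2|}

/-- The set `P_c = Υ ∩ ({0} ∪ ⋃ A_{n,k}-cylinders)`. -/
def Pc : Set Heis := UpsilonCusp ∩ cantorUnion

/-- `L : H¹ → ℝ` is group linear: additive on the group and homogeneous for dilations. -/
def GroupLinear (L : Heis → ℝ) : Prop :=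
  (∀ p q, L (hmul p q) = L p + L q) ∧ ∀ r : ℝ, 0 < r → ∀ p, L (hdil r p) = r * L p

/-- Pansu differentiability of `f : H¹ → ℝ` at `x₀`. -/
def PansuDiffAt (f : Heis → ℝ) (x₀ : Heis) : Prop :=
  ∃ L : Heis → ℝ, GroupLinear L ∧
    Tendsto (fun h => (f (hmul x₀ h) - f x₀ - L h) / dk h 0) (𝓝[≠] (0 : Heis)) (𝓝 0)

/-- Pansu subdifferentiability of `f : H¹ → ℝ` at `x₀`:
`liminf_{h→0} (f(x₀h) − f(x₀) − L(h))/d_k(h) ≥ 0` for some group linear `L`. -/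
def PansuSubdiffAt (f : Heis → ℝ) (x₀ : Heis) : Prop :=
  ∃ L : Heis → ℝ, GroupLinear L ∧ ∀ ε : ℝ, 0 < ε →
    ∀ᶠ h in 𝓝[≠] (0 : Heis), -ε < (f (hmul x₀ h) - f x₀ - L h) / dk h 0

/-- Subdifferentiability of `F : ℝ → ℝ` at `a`:
`liminf_{t→0} (F(a+t) − F(a) − ℓt)/|t| ≥ 0` for some `ℓ ∈ ℝ`. -/
def RSubdiffAt (F : ℝ → ℝ) (a : ℝ) : Prop :=
  ∃ l : ℝ, ∀ ε : ℝ, 0 < ε →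
    ∀ᶠ t in 𝓝[≠] (0 : ℝ), -ε < (F (a + t) - F a - l * t) / |t|

/-- `f` is Lipschitz with respect to the Koranyi distance. -/
def DkLipschitz (f : Heis → ℝ) : Prop :=
  ∃ K : ℝ, 0 ≤ K ∧ ∀ p q, |f p - f q| ≤ K * dk p q

/-- The first horizontal derivative `X₁f(p)` has value `d`. -/
def HDeriv1 (f : Heis → ℝ) (p : Heis) (d : ℝ) : Prop :=
  Tendsto (fun s : ℝ => (f (hmul p (s, 0, 0)) - f p) / s) (𝓝[≠] (0 : ℝ)) (𝓝 d)

/-- The second horizontal derivative `X₂f(p)` has value `d`. -/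
def HDeriv2 (f : Heis → ℝ) (p : Heis) (d : ℝ) : Prop :=
  Tendsto (fun s : ℝ => (f (hmul p (0, s, 0)) - f p) / s) (𝓝[≠] (0 : ℝ)) (𝓝 d)

-- AUX START

lemma rpow_quarter_eq (x : ℝ) (hx : 0 ≤ x) :
    x ^ ((1:ℝ)/4) = Real.sqrt (Real.sqrt x) := by
  rw [Real.sqrt_eq_rpow, Real.sqrt_eq_rpow, ← Real.rpow_mul hx]
  norm_num

lemma dk_sqrt (p q : Heis) : dk p q =
    Real.sqrt (Real.sqrt (((q.1 - p.1) ^ 2 + (q.2.1 - p.2.1) ^ 2) ^ 2 +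
      (q.2.2 - p.2.2 + 2 * (p.1 * q.2.1 - p.2.1 * q.1)) ^ 2)) := by
  unfold dk knorm hmul hinv
  simp only
  rw [rpow_quarter_eq _ (by positivity)]
  ring_nf

lemma dk_nonneg (p q : Heis) : 0 ≤ dk p q := by
  rw [dk_sqrt]; exact Real.sqrt_nonneg _

lemma abs_le_dk1 (p q : Heis) : |q.1 - p.1| ≤ dk p q := by
  rw [dk_sqrt]
  refine Real.le_sqrt_of_sq_le (Real.le_sqrt_of_sq_le ?_)
  nlinarith [sq_abs (q.1 - p.1), sq_nonneg (q.2.1 - p.2.1),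
    sq_nonneg (q.2.2 - p.2.2 + 2 * (p.1 * q.2.1 - p.2.1 * q.1)),
    sq_nonneg ((q.1 - p.1) * (q.2.1 - p.2.1))]

lemma abs_le_dk2 (p q : Heis) : |q.2.1 - p.2.1| ≤ dk p q := by
  rw [dk_sqrt]
  refine Real.le_sqrt_of_sq_le (Real.le_sqrt_of_sq_le ?_)
  nlinarith [sq_abs (q.2.1 - p.2.1), sq_nonneg (q.1 - p.1),
    sq_nonneg (q.2.2 - p.2.2 + 2 * (p.1 * q.2.1 - p.2.1 * q.1)),
    sq_nonneg ((q.1 - p.1) * (q.2.1 - p.2.1))]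

lemma abs_le_dk3 (p q : Heis) :
    |q.2.2 - p.2.2 + 2 * (p.1 * q.2.1 - p.2.1 * q.1)| ≤ (dk p q) ^ 2 := by
  rw [dk_sqrt, Real.sq_sqrt (Real.sqrt_nonneg _)]
  refine Real.le_sqrt_of_sq_le ?_
  nlinarith [sq_abs (q.2.2 - p.2.2 + 2 * (p.1 * q.2.1 - p.2.1 * q.1)),
    sq_nonneg ((q.1 - p.1) ^ 2 + (q.2.1 - p.2.1) ^ 2)]

lemma dk0_sqrt (h : Heis) :
    dk h 0 = Real.sqrt (Real.sqrt ((h.1 ^ 2 + h.2.1 ^ 2) ^ 2 + h.2.2 ^ 2)) := by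
  rw [dk_sqrt]
  norm_num

lemma abs_fst_le_dk0 (h : Heis) : |h.1| ≤ dk h 0 := by
  have := abs_le_dk1 h 0
  simp only [Prod.fst_zero, Prod.snd_zero, zero_sub, abs_neg] at this
  simpa using this

lemma abs_snd_le_dk0 (h : Heis) : |h.2.1| ≤ dk h 0 := by
  have := abs_le_dk2 h 0
  simp only [Prod.fst_zero, Prod.snd_zero, zero_sub, abs_neg] at this
  simpa using this

lemma abs_thd_le_dk0 (h : Heis) : |h.2.2| ≤ (dk h 0) ^ 2 := by
  have := abs_le_dk3 h 0
  simp only [Prod.fst_zero, Prod.snd_zero, zero_sub, mul_zero, zero_mul,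
    sub_zero, add_zero, abs_neg] at this
  simpa using this

lemma dk0_pos (h : Heis) (hh : h ≠ 0) : 0 < dk h 0 := by
  rw [dk0_sqrt]
  apply Real.sqrt_pos.2
  apply Real.sqrt_pos.2
  have h1 : h.1 ≠ 0 ∨ h.2.1 ≠ 0 ∨ h.2.2 ≠ 0 := by
    by_contra hc
    push_neg at hc
    exact hh (by ext <;> simp [hc.1, hc.2.1, hc.2.2])
  rcases h1 with h1 | h1 | h1
  · have : (0:ℝ) < h.1 ^ 2 := by positivity
    nlinarith [sq_nonneg h.2.1, sq_nonneg h.2.2, sq_nonneg (h.1 ^ 2 + h.2.1 ^ 2)]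
  · have : (0:ℝ) < h.2.1 ^ 2 := by positivity
    nlinarith [sq_nonneg h.1, sq_nonneg h.2.2, sq_nonneg (h.1 ^ 2 + h.2.1 ^ 2)]
  · have : (0:ℝ) < h.2.2 ^ 2 := by positivity
    nlinarith [sq_nonneg (h.1 ^ 2 + h.2.1 ^ 2)]

lemma tendsto_dk0 : Tendsto (fun h : Heis => dk h 0) (𝓝 0) (𝓝 0) := by
  have hc : Continuous (fun h : Heis =>
      Real.sqrt (Real.sqrt ((h.1 ^ 2 + h.2.1 ^ 2) ^ 2 + h.2.2 ^ 2))) := by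
    fun_prop
  have := hc.tendsto (0 : Heis)
  simp only [Prod.fst_zero, Prod.snd_zero] at this
  norm_num at this
  convert this using 2 with h
  exact dk0_sqrt h

lemma pansu_of_diffAt (f : Heis → ℝ) (x₀ : Heis)
    (hF : DifferentiableAt ℝ (fun h : Heis => f (hmul x₀ h)) 0) : PansuDiffAt f x₀ := by
  set F : Heis → ℝ := fun h => f (hmul x₀ h) with hFdef
  set D : Heis →L[ℝ] ℝ := fderiv ℝ F 0 with hDdef
  have hD : HasFDerivAt F D 0 := hF.hasFDerivAt
  have hF0 : F 0 = f x₀ := by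
    have : hmul x₀ 0 = x₀ := by
      unfold hmul
      ext <;> simp
    simp [hFdef, this]
  set r : ℝ := D (0, 0, 1) with hrdef
  have hDsplit : ∀ h : Heis, D h = D (h.1, h.2.1, 0) + h.2.2 * r := by
    intro h
    have hh : h = ((h.1, h.2.1, (0:ℝ)) : Heis) + h.2.2 • (((0:ℝ), (0:ℝ), (1:ℝ)) : Heis) := by
      ext <;> simp
    calc D h = D ((h.1, h.2.1, (0:ℝ)) + h.2.2 • (((0:ℝ), (0:ℝ), (1:ℝ)) : Heis)) := by rw [← hh]
      _ = D (h.1, h.2.1, 0) + h.2.2 * r := by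
          rw [map_add, _root_.map_smul, smul_eq_mul]
  refine ⟨fun h => D (h.1, h.2.1, 0), ⟨?_, ?_⟩, ?_⟩
  · intro p q
    have : ((hmul p q).1, (hmul p q).2.1, (0:ℝ)) =
        ((p.1, p.2.1, (0:ℝ)) : Heis) + ((q.1, q.2.1, (0:ℝ)) : Heis) := by
      unfold hmul; ext <;> simp
    show D ((hmul p q).1, (hmul p q).2.1, 0) = D (p.1, p.2.1, 0) + D (q.1, q.2.1, 0)
    rw [this, map_add]
  · intro c hc p
    have : ((hdil c p).1, (hdil c p).2.1, (0:ℝ)) = c • ((p.1, p.2.1, (0:ℝ)) : Heis) := by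
      unfold hdil; ext <;> simp
    show D ((hdil c p).1, (hdil c p).2.1, 0) = c * D (p.1, p.2.1, 0)
    rw [this, _root_.map_smul, smul_eq_mul]
  · -- the limit
    have key : Tendsto (fun h : Heis => ‖h‖⁻¹ * ‖F h - F 0 - D h‖) (𝓝 0) (𝓝 0) := by
      have := hasFDerivAt_iff_tendsto.mp hD
      simpa using this
    have hbnd : Tendsto (fun h : Heis => ‖h‖⁻¹ * ‖F h - F 0 - D h‖ + |r| * dk h 0)
        (𝓝[≠] (0:Heis)) (𝓝 0) := by
      have h2 : Tendsto (fun h : Heis => |r| * dk h 0) (𝓝 (0:Heis)) (𝓝 0) := by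
        simpa using tendsto_dk0.const_mul |r|
      simpa using (key.add h2).mono_left nhdsWithin_le_nhds
    refine squeeze_zero_norm' ?_ hbnd
    have hev : ∀ᶠ h : Heis in 𝓝[≠] (0:Heis), dk h 0 < 1 := by
      exact (tendsto_dk0.mono_left nhdsWithin_le_nhds).eventually (eventually_lt_nhds zero_lt_one)
    filter_upwards [hev, self_mem_nhdsWithin] with h hd1 hne
    have hd0 : 0 < dk h 0 := dk0_pos h hne
    set d : ℝ := dk h 0 with hddef
    have hnorm_le : ‖h‖ ≤ d := by
      have e1 : ‖h‖ = max |h.1| (max |h.2.1| |h.2.2|) := by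
        rw [Prod.norm_def, Prod.norm_def, Real.norm_eq_abs, Real.norm_eq_abs, Real.norm_eq_abs]
      rw [e1]
      refine max_le (abs_fst_le_dk0 h) (max_le (abs_snd_le_dk0 h) ?_)
      calc |h.2.2| ≤ d ^ 2 := abs_thd_le_dk0 h
        _ ≤ d * 1 := by rw [sq]; exact mul_le_mul_of_nonneg_left hd1.le hd0.le
        _ = d := mul_one d
    have hnorm_pos : 0 < ‖h‖ := norm_pos_iff.mpr hne
    have hnum : F h - f x₀ - D (h.1, h.2.1, 0) = (F h - F 0 - D h) + h.2.2 * r := by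
      rw [hDsplit h, hF0]; ring
    rw [Real.norm_eq_abs]
    calc |(f (hmul x₀ h) - f x₀ - D (h.1, h.2.1, 0)) / d|
        = |(F h - F 0 - D h) + h.2.2 * r| / d := by
          rw [abs_div, abs_of_pos hd0, ← hnum]
      _ ≤ (|F h - F 0 - D h| + |h.2.2 * r|) / d := by
          gcongr
          exact abs_add_le _ _
      _ = |F h - F 0 - D h| / d + |h.2.2 * r| / d := add_div _ _ _
      _ ≤ |F h - F 0 - D h| / ‖h‖ + |r| * d := by
          gcongr
          rw [abs_mul, div_le_iff₀ hd0]
          calc |h.2.2| * |r| ≤ d ^ 2 * |r| :=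
                mul_le_mul_of_nonneg_right (abs_thd_le_dk0 h) (abs_nonneg _)
            _ = |r| * d * d := by ring
      _ = ‖h‖⁻¹ * ‖F h - F 0 - D h‖ + |r| * d := by
          rw [div_eq_inv_mul, Real.norm_eq_abs]

def phiB : ContDiffBump (0:ℝ) := ⟨1, 2, one_pos, one_lt_two⟩

def phi : ℝ → ℝ := fun s => phiB s

lemma phi_nonneg (s : ℝ) : 0 ≤ phi s := phiB.nonneg

lemma phi_le_one (s : ℝ) : phi s ≤ 1 := phiB.le_one

lemma phi_zero : phi 0 = 1 :=
  phiB.one_of_mem_closedBall (by simp [phiB])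

lemma phi_eq_zero {s : ℝ} (hs : 2 ≤ |s|) : phi s = 0 :=
  phiB.zero_of_le_dist (by simpa [phiB, Real.dist_eq] using hs)

@[fun_prop]
lemma phi_diff : Differentiable ℝ phi := (phiB.contDiff (n := 1)).differentiable (by norm_num)

lemma phi_lip : ∃ C : ℝ, 0 ≤ C ∧ ∀ a b : ℝ, |phi a - phi b| ≤ C * |a - b| := by
  have hK : IsCompact (tsupport (deriv phi)) := phiB.hasCompactSupport.deriv
  obtain ⟨C, hC⟩ := hK.exists_bound_of_continuousOn
    (((phiB.contDiff (n := 1)).continuous_deriv le_rfl).continuousOn)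
  set C' : ℝ := max C 0 with hC'
  have hC'0 : 0 ≤ C' := le_max_right _ _
  have hball : ∀ x, ‖deriv phi x‖ ≤ C' := by
    intro x
    by_cases hx : x ∈ tsupport (deriv phi)
    · exact (hC x hx).trans (le_max_left _ _)
    · rw [image_eq_zero_of_notMem_tsupport hx]
      simpa using hC'0
  have hlip : LipschitzWith C'.toNNReal phi := by
    refine lipschitzWith_of_nnnorm_deriv_le phi_diff fun x => ?_
    rw [← NNReal.coe_le_coe, coe_nnnorm, Real.coe_toNNReal _ hC'0]
    exact hball x
  refine ⟨C', hC'0, fun a b => ?_⟩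
  have := hlip.dist_le_mul a b
  rwa [Real.dist_eq, Real.dist_eq, Real.coe_toNNReal _ hC'0] at this

lemma abs_phi_le_one (s : ℝ) : |phi s| ≤ 1 := by
  rw [abs_of_nonneg (phi_nonneg s)]; exact phi_le_one s

lemma abs_phi2_le_one (s t : ℝ) : |phi s * phi t| ≤ 1 := by
  rw [abs_mul]
  exact mul_le_one₀ (abs_phi_le_one s) (abs_nonneg _) (abs_phi_le_one t)

lemma abs_phi3_le_one (s t u : ℝ) : |phi s * phi t * phi u| ≤ 1 := by
  rw [abs_mul]
  exact mul_le_one₀ (abs_phi2_le_one s t) (abs_nonneg _) (abs_phi_le_one u)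

/-- There exists a bump function on `H¹`: `1`-Lipschitz for `d_k`, everywhere Pansu
differentiable, nonnegative, compactly supported, and not identically zero. -/
theorem stmt_15 :
    ∃ b : Heis → ℝ,
      (∀ p q, |b p - b q| ≤ dk p q) ∧
      (∀ x, PansuDiffAt b x) ∧
      (∀ x, 0 ≤ b x) ∧
      HasCompactSupport b ∧
      (∃ x, b x ≠ 0) := by
  obtain ⟨C, hC0, hCl⟩ := phi_lip
  set K : ℝ := 11 * C + 2 with hKdef
  have hK0 : (0:ℝ) < K := by positivity
  refine ⟨fun p => (phi p.1 * phi p.2.1 * phi p.2.2) / K, ?_, ?_, ?_, ?_, ?_⟩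
  · -- 1-Lipschitz
    intro p q
    simp only
    have key : |phi p.1 * phi p.2.1 * phi p.2.2 - phi q.1 * phi q.2.1 * phi q.2.2|
        ≤ K * dk p q := by
      set d : ℝ := dk p q with hd
      have hd0 : 0 ≤ d := dk_nonneg p q
      have h1 : |p.1 - q.1| ≤ d := by rw [abs_sub_comm]; exact abs_le_dk1 p q
      have h2 : |p.2.1 - q.2.1| ≤ d := by rw [abs_sub_comm]; exact abs_le_dk2 p q
      rcases le_or_gt d 1 with hcase | hcase
      · -- small distance: telescope
        have hT3 : |phi q.1 * phi q.2.1 * (phi p.2.2 - phi q.2.2)| ≤ 9 * (C * d) := by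
          by_cases hq1 : 2 ≤ |q.1|
          · rw [phi_eq_zero hq1]
            simp only [zero_mul, abs_zero]
            positivity
          by_cases hq2 : 2 ≤ |q.2.1|
          · rw [phi_eq_zero hq2]
            simp only [mul_zero, zero_mul, abs_zero]
            positivity
          push_neg at hq1 hq2
          have e2 : |p.1 * q.2.1 - p.2.1 * q.1| ≤ 4 * d := by
            have e3 : p.1 * q.2.1 - p.2.1 * q.1
                = q.2.1 * (p.1 - q.1) + (-(q.1 * (p.2.1 - q.2.1))) := by ring
            rw [e3]
            calc |q.2.1 * (p.1 - q.1) + (-(q.1 * (p.2.1 - q.2.1)))|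
                ≤ |q.2.1 * (p.1 - q.1)| + |(-(q.1 * (p.2.1 - q.2.1)))| := abs_add_le _ _
              _ = |q.2.1| * |p.1 - q.1| + |q.1| * |p.2.1 - q.2.1| := by
                  rw [abs_neg, abs_mul, abs_mul]
              _ ≤ 2 * d + 2 * d :=
                  add_le_add (mul_le_mul hq2.le h1 (abs_nonneg _) (by norm_num))
                    (mul_le_mul hq1.le h2 (abs_nonneg _) (by norm_num))
              _ = 4 * d := by ring
          have e1 : |p.2.2 - q.2.2| ≤ d ^ 2 + 8 * d := by
            have h3 := abs_le_dk3 p q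
            have e4 : p.2.2 - q.2.2
                = -(q.2.2 - p.2.2 + 2 * (p.1 * q.2.1 - p.2.1 * q.1))
                  + 2 * (p.1 * q.2.1 - p.2.1 * q.1) := by ring
            rw [e4]
            calc |(-(q.2.2 - p.2.2 + 2 * (p.1 * q.2.1 - p.2.1 * q.1)))
                  + 2 * (p.1 * q.2.1 - p.2.1 * q.1)|
                ≤ |(-(q.2.2 - p.2.2 + 2 * (p.1 * q.2.1 - p.2.1 * q.1)))|
                  + |2 * (p.1 * q.2.1 - p.2.1 * q.1)| := abs_add_le _ _
              _ ≤ d ^ 2 + 2 * (4 * d) := by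
                  rw [abs_neg, abs_mul, show |(2:ℝ)| = 2 by norm_num]
                  exact add_le_add h3 (mul_le_mul_of_nonneg_left e2 (by norm_num))
              _ = d ^ 2 + 8 * d := by ring
          have e5 : |phi p.2.2 - phi q.2.2| ≤ C * (d ^ 2 + 8 * d) :=
            (hCl _ _).trans (mul_le_mul_of_nonneg_left e1 hC0)
          calc |phi q.1 * phi q.2.1 * (phi p.2.2 - phi q.2.2)|
              = |phi q.1 * phi q.2.1| * |phi p.2.2 - phi q.2.2| := abs_mul _ _
            _ ≤ 1 * (C * (d ^ 2 + 8 * d)) :=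
                mul_le_mul (abs_phi2_le_one _ _) e5 (abs_nonneg _) zero_le_one
            _ = C * (d ^ 2 + 8 * d) := one_mul _
            _ ≤ 9 * (C * d) := by
                nlinarith [mul_le_mul_of_nonneg_left
                  (mul_le_mul_of_nonneg_right hcase hd0) hC0]
        have hA : |(phi p.1 - phi q.1) * (phi p.2.1 * phi p.2.2)| ≤ C * d := by
          calc |(phi p.1 - phi q.1) * (phi p.2.1 * phi p.2.2)|
              = |phi p.1 - phi q.1| * |phi p.2.1 * phi p.2.2| := abs_mul _ _
            _ ≤ (C * d) * 1 :=
                mul_le_mul ((hCl _ _).trans (mul_le_mul_of_nonneg_left h1 hC0))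
                  (abs_phi2_le_one _ _) (abs_nonneg _) (mul_nonneg hC0 hd0)
            _ = C * d := mul_one _
        have hB : |phi q.1 * ((phi p.2.1 - phi q.2.1) * phi p.2.2)| ≤ C * d := by
          calc |phi q.1 * ((phi p.2.1 - phi q.2.1) * phi p.2.2)|
              = |phi q.1| * (|phi p.2.1 - phi q.2.1| * |phi p.2.2|) := by
                rw [abs_mul, abs_mul]
            _ ≤ 1 * ((C * d) * 1) :=
                mul_le_mul (abs_phi_le_one _)
                  (mul_le_mul ((hCl _ _).trans (mul_le_mul_of_nonneg_left h2 hC0))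
                    (abs_phi_le_one _) (abs_nonneg _) (mul_nonneg hC0 hd0))
                  (mul_nonneg (abs_nonneg _) (abs_nonneg _)) zero_le_one
            _ = C * d := by ring
        have edecomp : phi p.1 * phi p.2.1 * phi p.2.2 - phi q.1 * phi q.2.1 * phi q.2.2
            = (phi p.1 - phi q.1) * (phi p.2.1 * phi p.2.2)
              + phi q.1 * ((phi p.2.1 - phi q.2.1) * phi p.2.2)
              + phi q.1 * phi q.2.1 * (phi p.2.2 - phi q.2.2) := by ring
        rw [edecomp]
        calc |(phi p.1 - phi q.1) * (phi p.2.1 * phi p.2.2)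
              + phi q.1 * ((phi p.2.1 - phi q.2.1) * phi p.2.2)
              + phi q.1 * phi q.2.1 * (phi p.2.2 - phi q.2.2)|
            ≤ |(phi p.1 - phi q.1) * (phi p.2.1 * phi p.2.2)
              + phi q.1 * ((phi p.2.1 - phi q.2.1) * phi p.2.2)|
              + |phi q.1 * phi q.2.1 * (phi p.2.2 - phi q.2.2)| := abs_add_le _ _
          _ ≤ (|(phi p.1 - phi q.1) * (phi p.2.1 * phi p.2.2)|
              + |phi q.1 * ((phi p.2.1 - phi q.2.1) * phi p.2.2)|)
              + |phi q.1 * phi q.2.1 * (phi p.2.2 - phi q.2.2)| :=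
                add_le_add_left (abs_add_le _ _) _
          _ ≤ (C * d + C * d) + 9 * (C * d) := add_le_add (add_le_add hA hB) hT3
          _ ≤ K * d := by rw [hKdef]; nlinarith
      · -- large distance
        have h2K : (2:ℝ) ≤ K := by rw [hKdef]; linarith
        calc |phi p.1 * phi p.2.1 * phi p.2.2 - phi q.1 * phi q.2.1 * phi q.2.2|
            ≤ |phi p.1 * phi p.2.1 * phi p.2.2| + |phi q.1 * phi q.2.1 * phi q.2.2| := by
              rw [sub_eq_add_neg]
              exact (abs_add_le _ _).trans (by rw [abs_neg])
          _ ≤ 1 + 1 := add_le_add (abs_phi3_le_one _ _ _) (abs_phi3_le_one _ _ _)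
          _ = 2 * 1 := by ring
          _ ≤ K * d := mul_le_mul h2K hcase.le zero_le_one (by linarith)
    rw [div_sub_div_same, abs_div, abs_of_pos hK0, div_le_iff₀ hK0]
    calc |phi p.1 * phi p.2.1 * phi p.2.2 - phi q.1 * phi q.2.1 * phi q.2.2|
        ≤ K * dk p q := key
      _ = dk p q * K := mul_comm _ _
  · -- Pansu differentiability everywhere
    intro x
    apply pansu_of_diffAt
    simp only [hmul]
    have hdiff : DifferentiableAt ℝ (fun h : Heis =>
        phi (x.1 + h.1) * phi (x.2.1 + h.2.1) *
          phi (x.2.2 + h.2.2 - 2 * (x.1 * h.2.1 - x.2.1 * h.1))) 0 := by fun_prop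
    simpa [div_eq_mul_inv] using hdiff.mul_const K⁻¹
  · -- nonnegative
    intro x
    apply div_nonneg _ hK0.le
    exact mul_nonneg (mul_nonneg (phi_nonneg _) (phi_nonneg _)) (phi_nonneg _)
  · -- compact support
    apply HasCompactSupport.intro (isCompact_closedBall (0:Heis) 2)
    intro p hp
    have h2 : (2:ℝ) < ‖p‖ := by
      rw [Metric.mem_closedBall, not_le, dist_zero_right] at hp
      exact hp
    rw [Prod.norm_def, Prod.norm_def, Real.norm_eq_abs, Real.norm_eq_abs, Real.norm_eq_abs]
      at h2
    rcases lt_max_iff.1 h2 with h | h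
    · rw [phi_eq_zero h.le]; simp
    · rcases lt_max_iff.1 h with h | h
      · rw [phi_eq_zero h.le]; simp
      · rw [phi_eq_zero h.le]; simp
  · -- not identically zero
    refine ⟨0, ?_⟩
    simp only [Prod.fst_zero, Prod.snd_zero, phi_zero, mul_one, one_mul]
    positivity
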